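/- Let H be the block matrix with H_uu = R₁₁ + γB₁ᵀPB₁, H_uv = γB₁ᵀPB₂, H_ux = γB₁ᵀPA, H_vv = R₁₂ + γB₂ᵀPB₂, H_vu = γB₂ᵀPB₁, H_vx = γB₂ᵀPA where R₁₁, R₁₂ are symmetric positive definite, P symmetric positive semidefinite, γ > 0. Assume the Schur complements H_uu − H_uv H_vv⁻¹ H_vu and H_vv − H_vu H_uu⁻¹ H_uv are invertible. Define K₁ = (H_uu − H_uv H_vv⁻¹ H_vu)⁻¹(H_ux − H_uv H_vv⁻¹ H_vx) and K₂ = (H_vv − H_vu H_uu⁻¹ H_uv)⁻¹(H_vx − H_vu H_uu⁻¹ H_ux). Then K₁ and K₂ satisfy the coupled equations K₁ = γ(R₁₁ + γB₁ᵀPB₁)⁻¹B₁ᵀP(A − B₂K₂) and K₂ = γ(R₁₂ + γB₂ᵀPB₂)⁻¹B₂ᵀP(A − B₁K₁). -/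

import Mathlib

open Matrix

lemma psd_smul {k : ℕ} (γ : ℝ) (hγ : 0 ≤ γ) {M : Matrix (Fin k) (Fin k) ℝ}
    (h : M.PosSemidef) : (γ • M).PosSemidef := by
  constructor
  · unfold Matrix.IsHermitian
    simp [← Matrix.conjTranspose_eq_transpose_of_trivial, h.1.eq]
  · intro x
    simpa [smul_mulVec, dotProduct_smul, Finsupp.mul_sum, mul_assoc, mul_left_comm] using mul_nonneg hγ (h.2 x)


lemma key_system {k l p : ℕ}
    (Huu : Matrix (Fin k) (Fin k) ℝ) (Huv : Matrix (Fin k) (Fin l) ℝ)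
    (Hux : Matrix (Fin k) (Fin p) ℝ) (Hvv : Matrix (Fin l) (Fin l) ℝ)
    (Hvu : Matrix (Fin l) (Fin k) ℝ) (Hvx : Matrix (Fin l) (Fin p) ℝ)
    (hu : IsUnit Huu.det) (hv : IsUnit Hvv.det)
    (hS1 : IsUnit (Huu - Huv * Hvv⁻¹ * Hvu).det)
    (hS2 : IsUnit (Hvv - Hvu * Huu⁻¹ * Huv).det)
    (K₁ : Matrix (Fin k) (Fin p) ℝ) (K₂ : Matrix (Fin l) (Fin p) ℝ)
    (hK₁ : K₁ = (Huu - Huv * Hvv⁻¹ * Hvu)⁻¹ * (Hux - Huv * Hvv⁻¹ * Hvx))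
    (hK₂ : K₂ = (Hvv - Hvu * Huu⁻¹ * Huv)⁻¹ * (Hvx - Hvu * Huu⁻¹ * Hux)) :
    Huu * K₁ = Hux - Huv * K₂ ∧ Hvv * K₂ = Hvx - Hvu * K₁ := by
  have e1 : (Huu - Huv * Hvv⁻¹ * Hvu) * K₁ = Hux - Huv * Hvv⁻¹ * Hvx := by
    rw [hK₁, Matrix.mul_nonsing_inv_cancel_left _ _ hS1]
  have e1' : Huu * K₁ - Huv * Hvv⁻¹ * Hvu * K₁ = Hux - Huv * Hvv⁻¹ * Hvx := by
    rw [← e1, Matrix.sub_mul]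
  have e3 : Huv * (Hvv⁻¹ * (Hvx - Hvu * K₁)) = Hux - Huu * K₁ := by
    have expand : Huv * (Hvv⁻¹ * (Hvx - Hvu * K₁))
        = Huv * Hvv⁻¹ * Hvx - Huv * Hvv⁻¹ * Hvu * K₁ := by
      simp only [Matrix.mul_sub, ← Matrix.mul_assoc]
    rw [expand, ← sub_eq_zero]
    rw [← sub_eq_zero] at e1'
    rw [← e1']
    abel
  have claim : (Hvv - Hvu * Huu⁻¹ * Huv) * (Hvv⁻¹ * (Hvx - Hvu * K₁))
      = Hvx - Hvu * Huu⁻¹ * Hux := by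
    rw [Matrix.sub_mul]
    have t1 : Hvv * (Hvv⁻¹ * (Hvx - Hvu * K₁)) = Hvx - Hvu * K₁ :=
      Matrix.mul_nonsing_inv_cancel_left _ _ hv
    have t2 : Hvu * Huu⁻¹ * Huv * (Hvv⁻¹ * (Hvx - Hvu * K₁))
        = Hvu * Huu⁻¹ * Hux - Hvu * K₁ := by
      rw [Matrix.mul_assoc (Hvu * Huu⁻¹) Huv, e3]
      simp only [Matrix.mul_sub, Matrix.mul_assoc, Matrix.nonsing_inv_mul_cancel_left _ _ hu]
    rw [t1, t2]
    abel
  have e2 : K₂ = Hvv⁻¹ * (Hvx - Hvu * K₁) := by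
    have c : (Hvv - Hvu * Huu⁻¹ * Huv) * K₂
        = (Hvv - Hvu * Huu⁻¹ * Huv) * (Hvv⁻¹ * (Hvx - Hvu * K₁)) := by
      rw [claim, hK₂, Matrix.mul_nonsing_inv_cancel_left _ _ hS2]
    have h2 := congrArg (fun M => (Hvv - Hvu * Huu⁻¹ * Huv)⁻¹ * M) c
    simpa only [Matrix.nonsing_inv_mul_cancel_left _ _ hS2] using h2
  refine ⟨?_, ?_⟩
  · rw [← sub_eq_zero]
    have h3 : Huv * K₂ = Hux - Huu * K₁ := by rw [e2, e3]
    rw [← sub_eq_zero] at h3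
    rw [← h3]; abel
  · rw [e2, Matrix.mul_nonsing_inv_cancel_left _ _ hv]

theorem stmt_5 {n m1 m2 : ℕ}
    (A P : Matrix (Fin n) (Fin n) ℝ) (B₁ : Matrix (Fin n) (Fin m1) ℝ)
    (B₂ : Matrix (Fin n) (Fin m2) ℝ)
    (R₁₁ : Matrix (Fin m1) (Fin m1) ℝ) (R₁₂ : Matrix (Fin m2) (Fin m2) ℝ)
    (γ : ℝ) (hγ : 0 < γ) (hP : P.PosSemidef) (hR11 : R₁₁.PosDef) (hR12 : R₁₂.PosDef)
    (Huu : Matrix (Fin m1) (Fin m1) ℝ) (Huv : Matrix (Fin m1) (Fin m2) ℝ)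
    (Hux : Matrix (Fin m1) (Fin n) ℝ) (Hvv : Matrix (Fin m2) (Fin m2) ℝ)
    (Hvu : Matrix (Fin m2) (Fin m1) ℝ) (Hvx : Matrix (Fin m2) (Fin n) ℝ)
    (hHuu : Huu = R₁₁ + γ • (B₁ᵀ * P * B₁)) (hHuv : Huv = γ • (B₁ᵀ * P * B₂))
    (hHux : Hux = γ • (B₁ᵀ * P * A)) (hHvv : Hvv = R₁₂ + γ • (B₂ᵀ * P * B₂))
    (hHvu : Hvu = γ • (B₂ᵀ * P * B₁)) (hHvx : Hvx = γ • (B₂ᵀ * P * A))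
    (hS1 : IsUnit (Huu - Huv * Hvv⁻¹ * Hvu).det)
    (hS2 : IsUnit (Hvv - Hvu * Huu⁻¹ * Huv).det)
    (K₁ : Matrix (Fin m1) (Fin n) ℝ) (K₂ : Matrix (Fin m2) (Fin n) ℝ)
    (hK₁ : K₁ = (Huu - Huv * Hvv⁻¹ * Hvu)⁻¹ * (Hux - Huv * Hvv⁻¹ * Hvx))
    (hK₂ : K₂ = (Hvv - Hvu * Huu⁻¹ * Huv)⁻¹ * (Hvx - Hvu * Huu⁻¹ * Hux)) :
    K₁ = γ • ((R₁₁ + γ • (B₁ᵀ * P * B₁))⁻¹ * (B₁ᵀ * P * (A - B₂ * K₂)))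
    ∧ K₂ = γ • ((R₁₂ + γ • (B₂ᵀ * P * B₂))⁻¹ * (B₂ᵀ * P * (A - B₁ * K₁))) := by
  have huu : IsUnit Huu.det := by
    rw [hHuu]
    exact (hR11.add_posSemidef (psd_smul γ hγ.le
      (by simpa using hP.conjTranspose_mul_mul_same B₁))).det_pos.ne'.isUnit
  have hvv : IsUnit Hvv.det := by
    rw [hHvv]
    exact (hR12.add_posSemidef (psd_smul γ hγ.le
      (by simpa using hP.conjTranspose_mul_mul_same B₂))).det_pos.ne'.isUnit
  obtain ⟨c1, c2⟩ := key_system Huu Huv Hux Hvv Hvu Hvx huu hvv hS1 hS2 K₁ K₂ hK₁ hK₂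
  have d1 : K₁ = Huu⁻¹ * (Hux - Huv * K₂) := by
    rw [← c1, Matrix.nonsing_inv_mul_cancel_left _ _ huu]
  have d2 : K₂ = Hvv⁻¹ * (Hvx - Hvu * K₁) := by
    rw [← c2, Matrix.nonsing_inv_mul_cancel_left _ _ hvv]
  constructor
  · rw [← hHuu, d1, hHux, hHuv]
    simp only [Matrix.mul_sub, Matrix.smul_mul, Matrix.mul_smul, smul_sub, Matrix.mul_assoc]
  · rw [← hHvv, d2, hHvx, hHvu]
    simp only [Matrix.mul_sub, Matrix.smul_mul, Matrix.mul_smul, smul_sub, Matrix.mul_assoc]
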